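/- Let Π_adm be a nonempty finite set of deterministic policies in a finite MDP and ε > 0. Then there exists a reward function R such that every ε-optimal deterministic policy under R lies in Π_adm, provided Π_adm = {π : π(s) ∈ A_adm(s) or μ^π(s) = 0 for all s} with each A_adm(s) nonempty; consequently the feasible set of the admissible policy teaching problem is nonempty and the infimum of ‖R̄ - R‖_2 - λ max_{π ∈ OPT^ε(R)} ρ^{π,R̄} over feasible R is attained. -/

import Mathlib

open scoped BigOperators

/-- A finite Markov decision process with discount factor `γ ∈ [0,1)` and initial
state distribution `init`. -/
structure MDP (S A : Type*) [Fintype S] [Fintype A] where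
  P : S → A → S → ℝ
  init : S → ℝ
  γ : ℝ
  P_nonneg : ∀ s a s', 0 ≤ P s a s'
  P_sum : ∀ s a, ∑ s', P s a s' = 1
  init_nonneg : ∀ s, 0 ≤ init s
  init_sum : ∑ s, init s = 1
  γ_nonneg : 0 ≤ γ
  γ_lt_one : γ < 1

variable {S A : Type*} [Fintype S] [Fintype A]

/-- One-step evolution of a state distribution under policy `π`. -/
def MDP.step (M : MDP S A) (π : S → A) (d : S → ℝ) : S → ℝ :=
  fun s' => ∑ s, d s * M.P s (π s) s'

/-- Distribution of the state `s_{t+1}` when executing `π` from `s_1 ~ init`. -/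
def MDP.stateDist (M : MDP S A) (π : S → A) : ℕ → S → ℝ
  | 0 => M.init
  | t + 1 => M.step π (M.stateDist π t)

/-- Discounted state occupancy measure
`μ^π(s) = E[(1-γ) ∑_{t ≥ 1} γ^{t-1} 1{s_t = s}]`. -/
noncomputable def MDP.occ (M : MDP S A) (π : S → A) (s : S) : ℝ :=
  (1 - M.γ) * ∑' t : ℕ, M.γ ^ t * M.stateDist π t s

/-- The score `ρ^{π,R} = E[(1-γ) ∑_{t ≥ 1} γ^{t-1} R(s_t, a_t)]` of policy `π`. -/
noncomputable def MDP.score (M : MDP S A) (π : S → A) (R : S → A → ℝ) : ℝ :=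
  (1 - M.γ) * ∑' t : ℕ, M.γ ^ t * ∑ s, M.stateDist π t s * R s (π s)

/-- Distribution of the state `t+1` steps after taking action `a0` in state `s0`
and following `π` afterwards. -/
def MDP.stateDistFrom (M : MDP S A) (π : S → A) (s0 : S) (a0 : A) : ℕ → S → ℝ
  | 0 => M.P s0 a0
  | t + 1 => M.step π (M.stateDistFrom π s0 a0 t)

/-- State-action value
`Q^{π,R}(s,a) = E[∑_{t ≥ 1} γ^{t-1} R(s_t,a_t) | s_1 = s, a_1 = a, then follow π]`. -/
noncomputable def MDP.Q (M : MDP S A) (π : S → A) (R : S → A → ℝ) (s : S) (a : A) : ℝ :=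
  R s a + ∑' t : ℕ, M.γ ^ (t + 1) * ∑ s', M.stateDistFrom π s a t s' * R s' (π s')

/-- Euclidean (`L2`) distance between two reward functions. -/
noncomputable def rdist (R R' : S → A → ℝ) : ℝ :=
  Real.sqrt (∑ s, ∑ a, (R s a - R' s a) ^ 2)

/-- The set `OPT^ε_det(R)` of `ε`-optimal deterministic policies under reward `R`. -/
noncomputable def MDP.OPT (M : MDP S A) (R : S → A → ℝ) (ε : ℝ) : Set (S → A) :=
  {π | M.score π R > (⨆ π' : S → A, M.score π' R) - ε}

/-- The set of admissible deterministic policies induced by per-state admissible action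
sets: `π` must take an admissible action in every state it visits with positive
occupancy. -/
def admissiblePolicies (M : MDP S A) (Aadm : S → Set A) : Set (S → A) :=
  {π | ∀ s, π s ∈ Aadm s ∨ M.occ π s = 0}

/-- The objective `l(R)` of the admissible policy teaching problem P1 (worst case over
tie-breaking among `ε`-optimal policies). -/
noncomputable def lfun [DecidableEq S] (M : MDP S A) (Rbar : S → A → ℝ)
    (ε lam : ℝ) (R : S → A → ℝ) : ℝ :=
  ⨆ π : M.OPT R ε, (rdist Rbar R - lam * M.score π.1 Rbar)

section AuxLemmas

lemma MDP.stateDist_nonneg (M : MDP S A) (π : S → A) : ∀ t s, 0 ≤ M.stateDist π t s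
  | 0, s => M.init_nonneg s
  | t + 1, s => Finset.sum_nonneg fun s' _ =>
      mul_nonneg (M.stateDist_nonneg π t s') (M.P_nonneg s' (π s') s)

lemma MDP.stateDist_sum (M : MDP S A) (π : S → A) : ∀ t, ∑ s, M.stateDist π t s = 1
  | 0 => M.init_sum
  | t + 1 => by
      simp only [MDP.stateDist, MDP.step]
      rw [Finset.sum_comm]
      have h : ∀ s, ∑ s', M.stateDist π t s * M.P s (π s) s' = M.stateDist π t s := by
        intro s
        rw [← Finset.mul_sum, M.P_sum, mul_one]
      simp only [h]
      exact M.stateDist_sum π t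

lemma MDP.stateDist_le_one (M : MDP S A) (π : S → A) (t : ℕ) (s : S) :
    M.stateDist π t s ≤ 1 := by
  have := Finset.single_le_sum (f := fun s => M.stateDist π t s)
    (fun s _ => M.stateDist_nonneg π t s) (Finset.mem_univ s)
  simpa [M.stateDist_sum π t] using this

lemma MDP.summable_aux (M : MDP S A) {f : ℕ → ℝ} {C : ℝ} (hf : ∀ t, |f t| ≤ C) :
    Summable fun t => M.γ ^ t * f t := by
  refine Summable.of_norm_bounded (g := fun t => C * M.γ ^ t)
    ((summable_geometric_of_lt_one M.γ_nonneg M.γ_lt_one).mul_left C) (fun t => ?_)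
  rw [Real.norm_eq_abs, abs_mul, abs_pow, abs_of_nonneg M.γ_nonneg, mul_comm]
  exact mul_le_mul_of_nonneg_right (hf t) (pow_nonneg M.γ_nonneg t)

lemma MDP.score_eq (M : MDP S A) (π : S → A) (R : S → A → ℝ) :
    M.score π R = ∑ s, M.occ π s * R s (π s) := by
  have hsumm : ∀ s : S, Summable fun t => M.γ ^ t * (M.stateDist π t s * R s (π s)) := by
    intro s
    refine M.summable_aux (C := |R s (π s)|) (fun t => ?_)
    rw [abs_mul]
    have h1 : |M.stateDist π t s| ≤ 1 := by
      rw [abs_of_nonneg (M.stateDist_nonneg π t s)]; exact M.stateDist_le_one π t s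
    nlinarith [abs_nonneg (R s (π s))]
  unfold MDP.score MDP.occ
  have h1 : ∀ t : ℕ, M.γ ^ t * ∑ s, M.stateDist π t s * R s (π s)
      = ∑ s, M.γ ^ t * (M.stateDist π t s * R s (π s)) := fun t => Finset.mul_sum _ _ _
  simp only [h1]
  rw [Summable.tsum_finsetSum (fun s _ => hsumm s)]
  rw [Finset.mul_sum]
  refine Finset.sum_congr rfl (fun s _ => ?_)
  have h2 : ∀ t : ℕ, M.γ ^ t * (M.stateDist π t s * R s (π s))
      = (M.γ ^ t * M.stateDist π t s) * R s (π s) := fun t => by ring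
  simp only [h2]
  rw [tsum_mul_right]
  ring

lemma MDP.occ_nonneg (M : MDP S A) (π : S → A) (s : S) : 0 ≤ M.occ π s :=
  mul_nonneg (by linarith [M.γ_lt_one]) (tsum_nonneg fun t =>
    mul_nonneg (pow_nonneg M.γ_nonneg t) (M.stateDist_nonneg π t s))

lemma MDP.continuous_score (M : MDP S A) (π : S → A) :
    Continuous fun R : S → A → ℝ => M.score π R := by
  simp only [MDP.score_eq]
  exact continuous_finset_sum _ fun s _ =>
    continuous_const.mul (continuous_apply_apply s (π s))

lemma rdist_nonneg' (R R' : S → A → ℝ) : 0 ≤ rdist R R' := Real.sqrt_nonneg _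

lemma continuous_rdist (Rbar : S → A → ℝ) : Continuous fun R : S → A → ℝ => rdist Rbar R := by
  unfold rdist
  refine Real.continuous_sqrt.comp ?_
  refine continuous_finset_sum _ fun s _ => continuous_finset_sum _ fun a _ => ?_
  exact (continuous_const.sub (continuous_apply_apply s a)).pow 2

lemma dist_le_rdist (Rbar R : S → A → ℝ) : dist R Rbar ≤ rdist Rbar R := by
  rw [dist_pi_le_iff (rdist_nonneg' _ _)]
  intro s
  rw [dist_pi_le_iff (rdist_nonneg' _ _)]
  intro a
  rw [Real.dist_eq]
  have h1 : |R s a - Rbar s a| = Real.sqrt ((Rbar s a - R s a) ^ 2) := by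
    rw [Real.sqrt_sq_eq_abs, abs_sub_comm]
  rw [h1]
  apply Real.sqrt_le_sqrt
  calc (Rbar s a - R s a) ^ 2 ≤ ∑ a', (Rbar s a' - R s a') ^ 2 :=
        Finset.single_le_sum (f := fun a' => (Rbar s a' - R s a') ^ 2)
          (fun a' _ => sq_nonneg _) (Finset.mem_univ a)
    _ ≤ ∑ s', ∑ a', (Rbar s' a' - R s' a') ^ 2 :=
        Finset.single_le_sum (f := fun s' => ∑ a', (Rbar s' a' - R s' a') ^ 2)
          (fun s' _ => Finset.sum_nonneg fun a' _ => sq_nonneg _) (Finset.mem_univ s)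

/-- The optimal score. -/
noncomputable def supScore (M : MDP S A) (R : S → A → ℝ) : ℝ := ⨆ π' : S → A, M.score π' R

lemma mem_OPT_iff (M : MDP S A) (R : S → A → ℝ) (ε : ℝ) (π : S → A) :
    π ∈ M.OPT R ε ↔ supScore M R - ε < M.score π R := Iff.rfl

section WithInstances
variable [DecidableEq S] [Nonempty A]

lemma exists_score_max (M : MDP S A) (R : S → A → ℝ) :
    ∃ π : S → A, (∀ π', M.score π' R ≤ M.score π R) ∧ supScore M R = M.score π R := by
  obtain ⟨π, -, hπ⟩ := Finset.exists_max_image Finset.univ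
    (fun π : S → A => M.score π R) Finset.univ_nonempty
  exact ⟨π, fun π' => hπ π' (Finset.mem_univ _),
    le_antisymm (ciSup_le fun π' => hπ π' (Finset.mem_univ _))
      (le_ciSup (f := fun π' : S → A => M.score π' R) (Set.finite_range _).bddAbove π)⟩

lemma continuous_supScore (M : MDP S A) :
    Continuous fun R : S → A → ℝ => supScore M R := by
  have h : ∀ R : S → A → ℝ, supScore M R
      = Finset.univ.sup' Finset.univ_nonempty (fun π : S → A => M.score π R) := by
    intro R
    apply le_antisymm
    · exact ciSup_le fun π => Finset.le_sup' (fun π : S → A => M.score π R) (Finset.mem_univ π)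
    · exact Finset.sup'_le _ _ fun π _ => le_ciSup (f := fun π' : S → A => M.score π' R) (Set.finite_range _).bddAbove π
  simp only [h]
  rw [continuous_iff_continuousAt]
  intro R
  exact ContinuousAt.finset_sup'_apply _ fun π _ => (M.continuous_score π).continuousAt

lemma OPT_nonempty (M : MDP S A) (R : S → A → ℝ) {ε : ℝ} (hε : 0 < ε) :
    ∃ π : S → A, π ∈ M.OPT R ε := by
  obtain ⟨π, -, hmax⟩ := exists_score_max M R
  exact ⟨π, by rw [mem_OPT_iff, ← hmax]; linarith⟩

end WithInstances

end AuxLemmas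

/-- Proposition 1: If every per-state admissible action set is nonempty,
then there exists a reward function `R` such that every `ε`-optimal deterministic policy
under `R` is admissible; consequently the feasible set of the admissible policy teaching
problem P1 is nonempty, and the infimum of the objective over feasible reward functions
is attained. -/

theorem stmt10 [DecidableEq S] [Nonempty A] (M : MDP S A) (Rbar : S → A → ℝ)
    (ε lam : ℝ) (hε : 0 < ε) (hlam : 0 ≤ lam)
    (Aadm : S → Set A) (hA : ∀ s, (Aadm s).Nonempty) :
    ∃ R : S → A → ℝ, M.OPT R ε ⊆ admissiblePolicies M Aadm ∧
      ∀ R' : S → A → ℝ, M.OPT R' ε ⊆ admissiblePolicies M Aadm →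
        lfun M Rbar ε lam R ≤ lfun M Rbar ε lam R' := by
  classical
  have hocc := M.occ_nonneg
  -- an admissible action in each state
  choose astar hastar using hA
  -- a uniform bound on |score π Rbar|
  set B : ℝ := Finset.univ.sup' Finset.univ_nonempty
      (fun π : S → A => |M.score π Rbar|) with hBdef
  have hB : ∀ π : S → A, |M.score π Rbar| ≤ B := fun π =>
    Finset.le_sup' (fun π : S → A => |M.score π Rbar|) (Finset.mem_univ π)
  have hB0 : 0 ≤ B := le_trans (abs_nonneg _) (hB (Classical.arbitrary _))
  -- basic facts about lfun
  have hbdd : ∀ R : S → A → ℝ, BddAbove (Set.range fun π : M.OPT R ε =>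
      rdist Rbar R - lam * M.score π.1 Rbar) := fun R => (Set.finite_range _).bddAbove
  have lfun_le : ∀ (R : S → A → ℝ) (π : S → A), π ∈ M.OPT R ε →
      rdist Rbar R - lam * M.score π Rbar ≤ lfun M Rbar ε lam R := by
    intro R π h
    exact le_ciSup (hbdd R) (⟨π, h⟩ : M.OPT R ε)
  have lfun_ub : ∀ R : S → A → ℝ, lfun M Rbar ε lam R ≤ rdist Rbar R + lam * B := by
    intro R
    obtain ⟨π0, h0⟩ := OPT_nonempty M R hε
    haveI : Nonempty (M.OPT R ε) := ⟨⟨π0, h0⟩⟩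
    refine ciSup_le fun π => ?_
    have h1 := mul_le_mul_of_nonneg_left ((abs_le.mp (hB π.1)).1) hlam
    nlinarith
  have lfun_lb : ∀ R : S → A → ℝ, rdist Rbar R - lam * B ≤ lfun M Rbar ε lam R := by
    intro R
    obtain ⟨π0, h0⟩ := OPT_nonempty M R hε
    have h1 := lfun_le R π0 h0
    have h2 : lam * M.score π0 Rbar ≤ lam * B :=
      mul_le_mul_of_nonneg_left (le_of_abs_le (hB π0)) hlam
    linarith
  have lfun_min : ∀ R : S → A → ℝ, ∃ π : S → A, π ∈ M.OPT R ε ∧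
      lfun M Rbar ε lam R = rdist Rbar R - lam * M.score π Rbar := by
    intro R
    obtain ⟨π0, h0⟩ := OPT_nonempty M R hε
    obtain ⟨πh, hmem, hmin⟩ := Set.exists_min_image (M.OPT R ε)
      (fun π => M.score π Rbar) (Set.toFinite _) ⟨π0, h0⟩
    haveI : Nonempty (M.OPT R ε) := ⟨⟨π0, h0⟩⟩
    refine ⟨πh, hmem, le_antisymm (ciSup_le fun π => ?_) (lfun_le R πh hmem)⟩
    have h1 := mul_le_mul_of_nonneg_left (hmin π.1 π.2) hlam
    linarith
  -- construction of a feasible reward R0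
  set g : (S → A) → ℝ := fun π =>
    if h : ∃ s, π s ∉ Aadm s ∧ M.occ π s ≠ 0 then ε / M.occ π h.choose else 0 with hgdef
  have hg_nonneg : ∀ π, 0 ≤ g π := by
    intro π
    rw [hgdef]
    dsimp only
    split
    · next h =>
        have hpos : 0 < M.occ π h.choose :=
          lt_of_le_of_ne (hocc _ _) (Ne.symm h.choose_spec.2)
        positivity
    · exact le_refl 0
  set c : ℝ := Finset.univ.sup' Finset.univ_nonempty g with hcdef
  have hgc : ∀ π, g π ≤ c := fun π => Finset.le_sup' g (Finset.mem_univ π)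
  have hc0 : 0 ≤ c := le_trans (hg_nonneg (Classical.arbitrary _)) (hgc _)
  set R0 : S → A → ℝ := fun s a => if a ∈ Aadm s then 0 else -c with hR0def
  have hR0_nonpos : ∀ s a, R0 s a ≤ 0 := by
    intro s a
    rw [hR0def]
    dsimp only
    split
    · exact le_refl 0
    · linarith
  have hscore_nonpos : ∀ π : S → A, M.score π R0 ≤ 0 := by
    intro π
    rw [M.score_eq]
    exact Finset.sum_nonpos fun s _ =>
      mul_nonpos_iff.mpr (Or.inl ⟨hocc π s, hR0_nonpos s (π s)⟩)
  have hscore_star : M.score astar R0 = 0 := by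
    rw [M.score_eq]
    refine Finset.sum_eq_zero fun s _ => ?_
    rw [hR0def]
    dsimp only
    rw [if_pos (hastar s), mul_zero]
  have hsup0 : supScore M R0 = 0 := by
    refine le_antisymm (ciSup_le hscore_nonpos) ?_
    rw [← hscore_star]
    exact le_ciSup (f := fun π' : S → A => M.score π' R0) (Set.finite_range _).bddAbove astar
  have hR0feas : M.OPT R0 ε ⊆ admissiblePolicies M Aadm := by
    intro π hπ
    by_contra hbad
    have hex : ∃ s, π s ∉ Aadm s ∧ M.occ π s ≠ 0 := by
      simp only [admissiblePolicies, Set.mem_setOf_eq, not_forall, not_or] at hbad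
      exact hbad
    obtain ⟨hs1, hs2⟩ := hex.choose_spec
    set s0 := hex.choose with hs0def
    have hoccpos : 0 < M.occ π s0 := lt_of_le_of_ne (hocc π s0) (Ne.symm hs2)
    have hcε : ε ≤ c * M.occ π s0 := by
      have h1 : g π = ε / M.occ π s0 := dif_pos hex
      have h2 := hgc π
      rw [h1, div_le_iff₀ hoccpos] at h2
      linarith
    have hsle : M.score π R0 ≤ -ε := by
      rw [M.score_eq]
      have hterm : ∀ s ∈ Finset.univ, M.occ π s * R0 s (π s)
          ≤ if s = s0 then M.occ π s0 * (-c) else 0 := by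
        intro s _
        split
        · next h =>
            subst h
            rw [hR0def]
            dsimp only
            rw [if_neg hs1]
        · exact mul_nonpos_iff.mpr (Or.inl ⟨hocc π s, hR0_nonpos s (π s)⟩)
      calc ∑ s, M.occ π s * R0 s (π s)
          ≤ ∑ s, if s = s0 then M.occ π s0 * (-c) else 0 := Finset.sum_le_sum hterm
        _ = M.occ π s0 * (-c) := by rw [Finset.sum_ite_eq' Finset.univ s0]; simp
        _ ≤ -ε := by nlinarith
    rw [mem_OPT_iff, hsup0] at hπ
    linarith
  -- the feasible set and its closedness
  set Feas : Set (S → A → ℝ) := {R | M.OPT R ε ⊆ admissiblePolicies M Aadm} with hFeasdef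
  have hFeas_closed : IsClosed Feas := by
    have hset : Feas = ⋂ π : S → A,
        {R : S → A → ℝ | π ∈ admissiblePolicies M Aadm ∨
          M.score π R ≤ supScore M R - ε} := by
      ext R
      simp only [hFeasdef, Set.mem_setOf_eq, Set.mem_iInter]
      constructor
      · intro h π
        by_cases hπ : π ∈ admissiblePolicies M Aadm
        · exact Or.inl hπ
        · refine Or.inr ?_
          by_contra hlt
          push_neg at hlt
          exact hπ (h ((mem_OPT_iff M R ε π).mpr hlt))
      · intro h π hπ
        rcases h π with h1 | h1
        · exact h1
        · exact absurd ((mem_OPT_iff M R ε π).mp hπ) (not_lt.mpr h1)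
    rw [hset]
    refine isClosed_iInter fun π => ?_
    by_cases hπ : π ∈ admissiblePolicies M Aadm
    · have : {R : S → A → ℝ | π ∈ admissiblePolicies M Aadm ∨
          M.score π R ≤ supScore M R - ε} = Set.univ := by
        ext R; simp [hπ]
      rw [this]; exact isClosed_univ
    · have : {R : S → A → ℝ | π ∈ admissiblePolicies M Aadm ∨
          M.score π R ≤ supScore M R - ε}
          = {R : S → A → ℝ | M.score π R ≤ supScore M R - ε} := by
        ext R; simp [hπ]
      rw [this]
      exact isClosed_le (M.continuous_score π)
        ((continuous_supScore M).sub continuous_const)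
  -- a compact feasible region
  set r : ℝ := max (dist R0 Rbar) (rdist Rbar R0 + 2 * lam * B + 1) with hrdef
  set K : Set (S → A → ℝ) := Feas ∩ Metric.closedBall Rbar r with hKdef
  have hR0K : R0 ∈ K := ⟨hR0feas, by
    rw [Metric.mem_closedBall]; exact le_max_left _ _⟩
  have hKcomp : IsCompact K := (isCompact_closedBall Rbar r).inter_left hFeas_closed
  -- the infimum of lfun over K
  set V : Set ℝ := (fun R => lfun M Rbar ε lam R) '' K with hVdef
  have hVne : V.Nonempty := ⟨_, Set.mem_image_of_mem _ hR0K⟩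
  have hVbdd : BddBelow V := by
    refine ⟨-(lam * B), ?_⟩
    rintro v ⟨R, -, rfl⟩
    have h1 := lfun_lb R
    have h2 := rdist_nonneg' Rbar R
    linarith
  set c0 : ℝ := sInf V with hc0def
  have hc0le : ∀ R ∈ K, c0 ≤ lfun M Rbar ε lam R := fun R h =>
    csInf_le hVbdd ⟨R, h, rfl⟩
  -- a minimizing sequence
  have hseq : ∀ n : ℕ, ∃ R ∈ K, lfun M Rbar ε lam R < c0 + 1 / ((n : ℝ) + 1) := by
    intro n
    have hlt : c0 < c0 + 1 / ((n : ℝ) + 1) := by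
      have : (0:ℝ) < 1 / ((n : ℝ) + 1) := by positivity
      linarith
    obtain ⟨v, ⟨R, hR, rfl⟩, hv⟩ := exists_lt_of_csInf_lt hVne hlt
    exact ⟨R, hR, hv⟩
  choose seq hseqK hseqlt using hseq
  obtain ⟨Rstar, hRstarK, φ, hφ, hconv⟩ := hKcomp.tendsto_subseq hseqK
  -- Rstar attains the infimum
  obtain ⟨πh, hπmem, hπeq⟩ := lfun_min Rstar
  have hFpos : 0 < M.score πh Rstar - (supScore M Rstar - ε) := by
    have := (mem_OPT_iff M Rstar ε πh).mp hπmem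
    linarith
  have hFcont : Continuous fun R : S → A → ℝ =>
      M.score πh R - (supScore M R - ε) :=
    (M.continuous_score πh).sub ((continuous_supScore M).sub continuous_const)
  have hFtend : Filter.Tendsto
      (fun n => M.score πh (seq (φ n)) - (supScore M (seq (φ n)) - ε))
      Filter.atTop (nhds (M.score πh Rstar - (supScore M Rstar - ε))) :=
    (hFcont.tendsto Rstar).comp hconv
  have hea : ∀ᶠ n in Filter.atTop,
      0 < M.score πh (seq (φ n)) - (supScore M (seq (φ n)) - ε) :=
    hFtend.eventually (eventually_gt_nhds hFpos)
  have hrtend : Filter.Tendsto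
      (fun n => rdist Rbar (seq (φ n)) - lam * M.score πh Rbar)
      Filter.atTop (nhds (rdist Rbar Rstar - lam * M.score πh Rbar)) :=
    (((continuous_rdist Rbar).tendsto Rstar).comp hconv).sub_const _
  have hgtend : Filter.Tendsto (fun n : ℕ => c0 + 1 / ((n : ℝ) + 1))
      Filter.atTop (nhds c0) := by
    have h1 := tendsto_one_div_add_atTop_nhds_zero_nat (𝕜 := ℝ)
    have h2 := Filter.Tendsto.add (tendsto_const_nhds (x := c0)) h1
    simpa using h2
  have hle : ∀ᶠ n in Filter.atTop,
      rdist Rbar (seq (φ n)) - lam * M.score πh Rbar ≤ c0 + 1 / ((n : ℝ) + 1) := by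
    filter_upwards [hea] with n hn
    have h1 : πh ∈ M.OPT (seq (φ n)) ε := by
      rw [mem_OPT_iff]; linarith
    have h2 := lfun_le (seq (φ n)) πh h1
    have h3 := hseqlt (φ n)
    have h4 : (1:ℝ) / ((φ n : ℝ) + 1) ≤ 1 / ((n : ℝ) + 1) := by
      have hnn : (n : ℝ) ≤ (φ n : ℝ) := Nat.cast_le.mpr hφ.le_apply
      apply one_div_le_one_div_of_le (by positivity)
      linarith
    linarith
  have hfinal : lfun M Rbar ε lam Rstar ≤ c0 := by
    rw [hπeq]
    exact le_of_tendsto_of_tendsto hrtend hgtend hle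
  -- conclusion
  refine ⟨Rstar, hRstarK.1, fun R' hR' => ?_⟩
  by_cases hball : R' ∈ Metric.closedBall Rbar r
  · exact hfinal.trans (hc0le R' ⟨hR', hball⟩)
  · rw [Metric.mem_closedBall, not_le] at hball
    have h1 : rdist Rbar R0 + 2 * lam * B + 1 ≤ r := le_max_right _ _
    have h2 := lfun_lb R'
    have h3 := dist_le_rdist Rbar R'
    have h4 := lfun_ub R0
    have h5 := hc0le R0 hR0K
    linarith
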